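/- (Granville) Let F ∈ ℤ[x,y,z] be a polynomial invariant under the substitution z ↦ −(x+y+z), i.e. F(x, y, −(x+y+z)) = F(x, y, z). Then F can be written as a polynomial in b = z(x+y+z) with coefficients in ℤ[x,y]; that is, there exists G ∈ ℤ[x,y][t] such that F(x,y,z) = G(x, y, z(x+y+z)). -/

import Mathlib

open Polynomial

/-- **Granville's theorem.** Identifying `ℤ[x,y,z]` with `ℤ[x,y][z]`:
if `F ∈ ℤ[x,y][z]` is invariant under the substitution
`z ↦ -(x + y + z)`, then `F` is a polynomial in `b = z(x+y+z)` with
coefficients in `ℤ[x,y]`, i.e. `F = G(z(x+y+z))` for some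
`G ∈ ℤ[x,y][t]`. -/
theorem granville_invariance
    (F : Polynomial (MvPolynomial (Fin 2) ℤ))
    (hF : Polynomial.aeval
        (-(C (MvPolynomial.X 0) + C (MvPolynomial.X 1) + X)) F = F) :
    ∃ G : Polynomial (MvPolynomial (Fin 2) ℤ),
      F = Polynomial.aeval
        (X * (C (MvPolynomial.X 0) + C (MvPolynomial.X 1) + X)) G := by
  set R := MvPolynomial (Fin 2) ℤ with hR
  set p : Polynomial R := -(C (MvPolynomial.X 0) + C (MvPolynomial.X 1) + X) with hp
  set b : Polynomial R := X * (C (MvPolynomial.X 0) + C (MvPolynomial.X 1) + X) with hb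
  have hcomp : ∀ q f : Polynomial R, aeval q f = f.comp q := by
    intro q f
    rw [aeval_def, Polynomial.comp, Polynomial.algebraMap_eq]
  have hσb : aeval p b = b := by
    simp only [hb, hp, map_mul, map_add, aeval_X, aeval_C, Polynomial.algebraMap_eq]
    ring
  have hpform : p = -(X + C (MvPolynomial.X 0 + MvPolynomial.X 1)) := by
    rw [hp, map_add]; ring
  have hbform : b = X * (X + C (MvPolynomial.X 0 + MvPolynomial.X 1)) := by
    rw [hb, map_add]; ring
  have hpdeg : p.natDegree = 1 := by
    rw [hpform, natDegree_neg, natDegree_X_add_C]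
  have hplc : p.leadingCoeff = -1 := by
    rw [hpform, leadingCoeff_neg, (monic_X_add_C _).leadingCoeff]
  have hbmonic : Monic b := by
    rw [hbform]; exact monic_X.mul (monic_X_add_C _)
  have hbdeg : b.natDegree = 2 := by
    rw [hbform, natDegree_mul X_ne_zero (monic_X_add_C _).ne_zero,
      natDegree_X, natDegree_X_add_C]
  clear_value p b
  suffices h : ∀ n (F : Polynomial R), aeval p F = F → F.natDegree ≤ n →
      ∃ G, F = aeval b G by
    exact h F.natDegree F hF le_rfl
  intro n
  induction n using Nat.strong_induction_on with
  | _ n ih =>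
    intro F hF hdeg
    by_cases h0 : F = 0
    · exact ⟨0, by simp [h0]⟩
    by_cases hd0 : F.natDegree = 0
    · exact ⟨C (F.coeff 0), by rw [eq_C_of_natDegree_eq_zero hd0]; simp; rfl⟩
    -- the degree is even
    have hlc : F.leadingCoeff = F.leadingCoeff * (-1) ^ F.natDegree := by
      conv_lhs => rw [← hF, hcomp]
      rw [leadingCoeff_comp (by rw [hpdeg]; exact one_ne_zero), hplc]
    have hlcne : F.leadingCoeff ≠ 0 := leadingCoeff_ne_zero.mpr h0
    have heven : Even F.natDegree := by
      rw [← neg_one_pow_eq_one_iff_even (R := R) (by norm_num)]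
      have := hlc
      nth_rewrite 1 [← mul_one F.leadingCoeff] at this
      exact (mul_left_cancel₀ hlcne this).symm
    obtain ⟨m, hm⟩ := heven
    set a := F.leadingCoeff with ha
    set B : Polynomial R := C a * b ^ m with hB
    have hbm : Monic (b ^ m) := hbmonic.pow m
    have hBne : B ≠ 0 := mul_ne_zero (by simpa using hlcne) hbm.ne_zero
    have hBdeg : B.natDegree = F.natDegree := by
      rw [hB, natDegree_mul (by simpa using hlcne) hbm.ne_zero,
        natDegree_C, natDegree_pow, hbdeg, hm]
      ring
    have hBlc : B.leadingCoeff = a := by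
      rw [hB, leadingCoeff_mul, leadingCoeff_C, hbm.leadingCoeff, mul_one]
    have hsub : (F - B).degree < F.degree := by
      apply degree_sub_lt _ h0 (by rw [hBlc])
      rw [degree_eq_natDegree h0, degree_eq_natDegree hBne, hBdeg]
    have hFB : aeval p (F - B) = F - B := by
      rw [map_sub, hF, hB, map_mul, map_pow, aeval_C, Polynomial.algebraMap_eq, hσb]
    by_cases hFB0 : F - B = 0
    · refine ⟨C a * X ^ m, ?_⟩
      have : F = B := by linear_combination (norm := ring_nf) hFB0
      rw [this, hB, map_mul, map_pow, aeval_C, aeval_X, Polynomial.algebraMap_eq]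
    · have hlt : (F - B).natDegree < n := by
        have h1 : (F - B).natDegree < F.natDegree :=
          natDegree_lt_natDegree hFB0 hsub
        omega
      obtain ⟨G', hG'⟩ := ih _ hlt (F - B) hFB le_rfl
      refine ⟨G' + C a * X ^ m, ?_⟩
      rw [map_add, ← hG', map_mul, map_pow, aeval_C, aeval_X, Polynomial.algebraMap_eq, ← hB]
      ring
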